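/- Let 𝔽 be a field and let σ_1, …, σ_{k+1} ∈ 𝔽 be pairwise distinct. Define the Lagrange weights t_i := ∏_{j≠i} (σ_i − σ_j) and the Lagrange polynomials l_i(λ) := (1/t_i)·∏_{j≠i} (λ − σ_j) for i = 1,…,k+1, and let π(λ) := (l_1(λ), …, l_{k+1}(λ))ᵀ. Define the k×(k+1) matrix pencil L(λ) with entries t_r·(λ − σ_r) in position (r,r) and −t_{r+1}·(λ − σ_{r+1}) in position (r,r+1), and zeros elsewhere. Then L(λ)·π(λ) = 0 identically, L(λ₀) has rank k for every λ₀ ∈ 𝔽, and the k×(k+1) matrix formed by the coefficients of λ in the entries of L(λ) has rank k (so L(λ) is a dual minimal basis for the Lagrange basis on the nodes σ_1,…,σ_{k+1}). -/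

import Mathlib

open Polynomial Matrix

namespace PaperLin

variable {F : Type*} [Field F]


private lemma const_of_step {k : ℕ} {α : Type*} (u : Fin (k+1) → α)
    (h : ∀ r : Fin k, u r.castSucc = u r.succ) : ∀ i, u i = u 0 := by
  intro i
  induction i using Fin.induction with
  | zero => rfl
  | succ i ih => rw [← h i]; exact ih

private lemma rank_bidiag {k : ℕ} (v : Fin (k+1) → F) (c : Fin (k+1))
    (hv : ∀ j, j ≠ c → v j ≠ 0) (M : Matrix (Fin k) (Fin (k+1)) F)
    (hM : ∀ r j, M r j =
      if j = r.castSucc then v r.castSucc else if j = r.succ then -v r.succ else 0) :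
    M.rank = k := by
  have hker : ∀ x : Fin (k+1) → F, M.mulVec x = 0 → x c = 0 → x = 0 := by
    intro x hx hxc
    have hrow : ∀ r : Fin k, v r.castSucc * x r.castSucc = v r.succ * x r.succ := by
      intro r
      have h0 := congrFun hx r
      have hne : r.castSucc ≠ r.succ := (Fin.castSucc_lt_succ : r.castSucc < r.succ).ne
      have hsum : ∀ j, M r j * x j
          = (if j = r.castSucc then v r.castSucc * x r.castSucc else 0)
            + (if j = r.succ then -(v r.succ * x r.succ) else 0) := by
        intro j
        rw [hM]
        rcases eq_or_ne j r.castSucc with h1 | h1 <;> rcases eq_or_ne j r.succ with h2 | h2 <;>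
          simp_all
      rw [Matrix.mulVec, dotProduct] at h0
      simp only [hsum, Finset.sum_add_distrib, Finset.sum_ite_eq', Finset.mem_univ,
        if_true, Pi.zero_apply] at h0
      linear_combination h0
    have hconst := const_of_step (fun j => v j * x j) hrow
    have hall : ∀ j, v j * x j = 0 := by
      intro j
      have := (hconst j).trans (hconst c).symm
      simpa [hxc] using this
    funext j
    rcases eq_or_ne j c with rfl | hj
    · exact hxc
    · exact (mul_eq_zero.mp (hall j)).resolve_left (hv j hj)
  -- kernel has dimension ≤ 1
  have hkerle : Module.finrank F (LinearMap.ker M.mulVecLin) ≤ 1 := by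
    have hinj : Function.Injective
        ((LinearMap.proj c : (Fin (k+1) → F) →ₗ[F] F).comp
          (LinearMap.ker M.mulVecLin).subtype) := by
      rw [← LinearMap.ker_eq_bot, LinearMap.ker_eq_bot']
      intro m hm
      have hmem : M.mulVec m.1 = 0 := m.2
      have : m.1 = 0 := hker m.1 hmem hm
      exact Subtype.ext this
    simpa using LinearMap.finrank_le_finrank_of_injective hinj
  have hrn := LinearMap.finrank_range_add_finrank_ker (M.mulVecLin)
  have hdim : Module.finrank F (Fin (k+1) → F) = k + 1 := by simp
  have hle : M.rank ≤ k := by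
    simpa using M.rank_le_card_height
  have : M.rank = Module.finrank F (LinearMap.range M.mulVecLin) := rfl
  omega

/-- The explicit bidiagonal pencil is a dual minimal basis for the Lagrange
basis on pairwise distinct nodes `σ_1, …, σ_{k+1}`. -/
theorem statement4 (k : ℕ) (σ : Fin (k + 1) → F) (hσ : Function.Injective σ) :
    let t : Fin (k + 1) → F := fun i => ∏ j ∈ Finset.univ.erase i, (σ i - σ j)
    let l : Fin (k + 1) → Polynomial F := fun i =>
      Polynomial.C (t i)⁻¹ *
        ∏ j ∈ Finset.univ.erase i, (Polynomial.X - Polynomial.C (σ j))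
    let L : Matrix (Fin k) (Fin (k + 1)) (Polynomial F) :=
      Matrix.of fun r c =>
        if c = r.castSucc then
          Polynomial.C (t r.castSucc) * (Polynomial.X - Polynomial.C (σ r.castSucc))
        else if c = r.succ then
          -(Polynomial.C (t r.succ) * (Polynomial.X - Polynomial.C (σ r.succ)))
        else 0
    L.mulVec l = 0 ∧
    (∀ x : F, (L.map (Polynomial.eval x)).rank = k) ∧
    (Matrix.of fun (r : Fin k) (c : Fin (k + 1)) => (L r c).coeff 1).rank = k := by
  intro t l L
  classical
  have ht : ∀ i, t i ≠ 0 := by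
    intro i
    refine Finset.prod_ne_zero_iff.mpr fun j hj => sub_ne_zero.mpr fun h => ?_
    exact (Finset.ne_of_mem_erase hj) (hσ h).symm
  have hkey : ∀ i, Polynomial.C (t i) * (Polynomial.X - Polynomial.C (σ i)) * l i
      = ∏ j, (Polynomial.X - Polynomial.C (σ j)) := by
    intro i
    show Polynomial.C (t i) * (Polynomial.X - Polynomial.C (σ i)) *
      (Polynomial.C (t i)⁻¹ * ∏ j ∈ Finset.univ.erase i, (Polynomial.X - Polynomial.C (σ j))) = _
    rw [← Finset.mul_prod_erase Finset.univ _ (Finset.mem_univ i)]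
    have h1 : Polynomial.C (t i) * Polynomial.C (t i)⁻¹ = 1 := by
      rw [← Polynomial.C_mul, mul_inv_cancel₀ (ht i), Polynomial.C_1]
    calc Polynomial.C (t i) * (Polynomial.X - Polynomial.C (σ i)) *
          (Polynomial.C (t i)⁻¹ * ∏ j ∈ Finset.univ.erase i, (Polynomial.X - Polynomial.C (σ j)))
        = (Polynomial.C (t i) * Polynomial.C (t i)⁻¹) *
          ((Polynomial.X - Polynomial.C (σ i)) *
            ∏ j ∈ Finset.univ.erase i, (Polynomial.X - Polynomial.C (σ j))) := by ring
      _ = _ := by rw [h1, one_mul]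
  refine ⟨?_, ?_, ?_⟩
  · funext r
    have hne : r.castSucc ≠ r.succ := (Fin.castSucc_lt_succ : r.castSucc < r.succ).ne
    have hsum : ∀ j, L r j * l j
        = (if j = r.castSucc then
            Polynomial.C (t r.castSucc) * (Polynomial.X - Polynomial.C (σ r.castSucc)) * l r.castSucc else 0)
          + (if j = r.succ then
            -(Polynomial.C (t r.succ) * (Polynomial.X - Polynomial.C (σ r.succ)) * l r.succ) else 0) := by
      intro j
      show (if j = r.castSucc then _ else if j = r.succ then _ else 0) * l j = _
      rcases eq_or_ne j r.castSucc with h1 | h1 <;> rcases eq_or_ne j r.succ with h2 | h2 <;>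
        simp_all [mul_comm]
    show ∑ j, L r j * l j = 0
    simp only [hsum, Finset.sum_add_distrib, Finset.sum_ite_eq', Finset.mem_univ, if_true,
      hkey]
    ring
  · intro x
    set c : Fin (k+1) := if h : ∃ i, x = σ i then h.choose else 0 with hc
    refine rank_bidiag (fun j => t j * (x - σ j)) c ?_ _ ?_
    · intro j hj hzero
      rcases mul_eq_zero.mp hzero with h | h
      · exact ht j h
      · have hx : x = σ j := by linear_combination h
        have hex : ∃ i, x = σ i := ⟨j, hx⟩
        have : c = j := by
          rw [hc, dif_pos hex]
          exact hσ (hex.choose_spec.symm.trans hx)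
        exact hj this.symm
    · intro r j
      show Polynomial.eval x (L r j) = _
      show Polynomial.eval x (if j = r.castSucc then _ else if j = r.succ then _ else 0) = _
      split_ifs <;> simp [mul_comm]
  · refine rank_bidiag t 0 (fun j _ => ht j) _ ?_
    intro r j
    show (L r j).coeff 1 = _
    show (if j = r.castSucc then _ else if j = r.succ then _ else (0:Polynomial F)).coeff 1 = _
    split_ifs <;> simp [coeff_C_mul, coeff_sub, coeff_C]

end PaperLin
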